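/- Let F be a field and b₁, b₂, b₃, b₄ ∈ F. Consider the reduced deformed D₄ map φ̂(y₁,y₂) = (y₁', y₂') with y₁' = ((b₁+y₁)y₂ + b₂)/y₁ and y₂' = ((b₄+y₂)y₁ + b₁y₂ + b₂)·((b₃+y₂)y₁ + b₁y₂ + b₂)/(y₂·y₁²·(b₁+y₁)). Suppose the parameters satisfy one of the three conditions: (I) b₂ = b₄ = b₁b₃, (II) b₁ = b₂ = b₃b₄, or (III) b₂ = b₃ = b₁b₄. Then for all nonzero y₁, y₂ with b₁ + y₁ ≠ 0 and with nonzero image coordinates, the rational function K̃₁(y₁,y₂) = y₁ + y₂ + y₁/y₂ + (b₁+1)·y₂/y₁ + (b₃+b₄+1)/y₂ + (b₁+b₂+b₃+b₄+1)/y₁ + b₁·y₂/y₁² + (b₃b₄+b₃+b₄)/(y₁y₂) + 2b₂/y₁² + b₃b₄/(y₁²y₂) satisfies K̃₁(φ̂(y₁,y₂)) = K̃₁(y₁,y₂); hence φ̂ is a Liouville integrable map of the plane. -/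

import Mathlib

set_option maxHeartbeats 4000000

/-- The first integral `K̃₁` of the reduced deformed D₄ map. -/
noncomputable def KtilD4 {F : Type*} [Field F] (b₁ b₂ b₃ b₄ y₁ y₂ : F) : F :=
  y₁ + y₂ + y₁ / y₂ + (b₁ + 1) * y₂ / y₁ + (b₃ + b₄ + 1) / y₂ +
    (b₁ + b₂ + b₃ + b₄ + 1) / y₁ + b₁ * y₂ / y₁ ^ 2 +
    (b₃ * b₄ + b₃ + b₄) / (y₁ * y₂) + 2 * b₂ / y₁ ^ 2 + b₃ * b₄ / (y₁ ^ 2 * y₂)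

lemma KtilD4_eq_div {F : Type*} [Field F] (b₁ b₂ b₃ b₄ x y : F) (hx : x ≠ 0) (hy : y ≠ 0) :
    KtilD4 b₁ b₂ b₃ b₄ x y =
      (x^3*y + x^2*y^2 + x^3 + (b₁+1)*x*y^2 + (b₃+b₄+1)*x^2 + (b₁+b₂+b₃+b₄+1)*x*y +
        b₁*y^2 + (b₃*b₄+b₃+b₄)*x + 2*b₂*y + b₃*b₄) / (x^2 * y) := by
  unfold KtilD4
  field_simp

/-- under any of the three parameter conditions
(I) `b₂ = b₄ = b₁b₃`, (II) `b₁ = b₂ = b₃b₄`, (III) `b₂ = b₃ = b₁b₄`, the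
rational function `K̃₁` is invariant under the reduced deformed D₄ map
`φ̂(y₁,y₂) = (((b₁+y₁)y₂+b₂)/y₁, ((b₄+y₂)y₁+b₁y₂+b₂)((b₃+y₂)y₁+b₁y₂+b₂)/(y₂y₁²(b₁+y₁)))`. -/
theorem deformed_D4_first_integral {F : Type*} [Field F] (b₁ b₂ b₃ b₄ y₁ y₂ : F)
    (hcond : (b₂ = b₄ ∧ b₂ = b₁ * b₃) ∨ (b₁ = b₂ ∧ b₁ = b₃ * b₄) ∨
      (b₂ = b₃ ∧ b₂ = b₁ * b₄))
    (h₁ : y₁ ≠ 0) (h₂ : y₂ ≠ 0) (hb : b₁ + y₁ ≠ 0)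
    (him₁ : ((b₁ + y₁) * y₂ + b₂) / y₁ ≠ 0)
    (him₂ : ((b₄ + y₂) * y₁ + b₁ * y₂ + b₂) * ((b₃ + y₂) * y₁ + b₁ * y₂ + b₂) /
      (y₂ * y₁ ^ 2 * (b₁ + y₁)) ≠ 0) :
    KtilD4 b₁ b₂ b₃ b₄ (((b₁ + y₁) * y₂ + b₂) / y₁)
        (((b₄ + y₂) * y₁ + b₁ * y₂ + b₂) * ((b₃ + y₂) * y₁ + b₁ * y₂ + b₂) /
          (y₂ * y₁ ^ 2 * (b₁ + y₁))) =
      KtilD4 b₁ b₂ b₃ b₄ y₁ y₂ := by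
  have hC : y₂ * y₁ ^ 2 * (b₁ + y₁) ≠ 0 :=
    mul_ne_zero (mul_ne_zero h₂ (pow_ne_zero 2 h₁)) hb
  set u := ((b₁ + y₁) * y₂ + b₂) / y₁ with hu
  set v := ((b₄ + y₂) * y₁ + b₁ * y₂ + b₂) * ((b₃ + y₂) * y₁ + b₁ * y₂ + b₂) /
      (y₂ * y₁ ^ 2 * (b₁ + y₁)) with hv
  have hu0 : u ≠ 0 := him₁
  have hv0 : v ≠ 0 := him₂
  have h1 : u * y₁ = (b₁ + y₁) * y₂ + b₂ := by
    rw [hu]; exact div_mul_cancel₀ _ h₁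
  have h2 : v * (y₂ * y₁ ^ 2 * (b₁ + y₁)) =
      ((b₄ + y₂) * y₁ + b₁ * y₂ + b₂) * ((b₃ + y₂) * y₁ + b₁ * y₂ + b₂) := by
    rw [hv]; exact div_mul_cancel₀ _ hC
  clear_value u v
  rw [KtilD4_eq_div b₁ b₂ b₃ b₄ u v hu0 hv0, KtilD4_eq_div b₁ b₂ b₃ b₄ y₁ y₂ h₁ h₂,
    div_eq_div_iff (mul_ne_zero (pow_ne_zero 2 hu0) hv0) (mul_ne_zero (pow_ne_zero 2 h₁) h₂)]
  refine mul_right_cancel₀ (b := y₁ ^ 3 * (y₂ * y₁ ^ 2 * (b₁ + y₁)) ^ 2)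
    (mul_ne_zero (pow_ne_zero 3 h₁) (pow_ne_zero 2 hC)) ?_
  obtain ⟨rfl, rfl⟩ | ⟨rfl, rfl⟩ | ⟨rfl, rfl⟩ := hcond
  · linear_combination (- y₁ ^ 9*y₂ ^ 3*u*v - y₁ ^ 9*y₂ ^ 4*v - y₁ ^ 9*y₂ ^ 4*u*v - y₁ ^ 9*y₂ ^ 5*v - y₁ ^ 10*y₂ ^ 2*u*v + y₁ ^ 10*y₂ ^ 3*v ^ 2 + y₁ ^ 10*y₂ ^ 3*u + y₁ ^ 10*y₂ ^ 3*u*v ^ 2 + y₁ ^ 10*y₂ ^ 3*u ^ 2 + y₁ ^ 10*y₂ ^ 3*u ^ 2*v + y₁ ^ 10*y₂ ^ 4 + y₁ ^ 10*y₂ ^ 4*v ^ 2 + y₁ ^ 10*y₂ ^ 4*u + y₁ ^ 10*y₂ ^ 5 - y₁ ^ 11*y₂ ^ 2*u*v - y₁ ^ 11*y₂ ^ 3*v - y₁ ^ 11*y₂ ^ 3*u*v - y₁ ^ 11*y₂ ^ 4*v - b₃*y₁ ^ 9*y₂ ^ 2*u*v - b₃*y₁ ^ 9*y₂ ^ 3*v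 - b₃*y₁ ^ 9*y₂ ^ 3*u*v - b₃*y₁ ^ 9*y₂ ^ 4*v - b₃*y₁ ^ 10*y₂ ^ 2*u*v + b₃*y₁ ^ 10*y₂ ^ 3 + b₃*y₁ ^ 10*y₂ ^ 3*u + b₃*y₁ ^ 10*y₂ ^ 4 - 2*b₁*y₁ ^ 8*y₂ ^ 3*u*v - 3*b₁*y₁ ^ 8*y₂ ^ 4*v - 3*b₁*y₁ ^ 8*y₂ ^ 4*u*v - 4*b₁*y₁ ^ 8*y₂ ^ 5*v - 2*b₁*y₁ ^ 9*y₂ ^ 2*u*v - b₁*y₁ ^ 9*y₂ ^ 3*v + 2*b₁*y₁ ^ 9*y₂ ^ 3*v ^ 2 + 2*b₁*y₁ ^ 9*y₂ ^ 3*u - b₁*y₁ ^ 9*y₂ ^ 3*u*v + 2*b₁*y₁ ^ 9*y₂ ^ 3*u*v ^ 2 + 2*b₁*y₁ ^ 9*y₂ ^ 3*u ^ 2 + 2*b₁*y₁ ^ 9*y₂ ^ 3*u ^ 2*v + 3*b₁*y₁ ^ 9*y₂ ^ 4 - b₁*y₁ ^ 9*y₂ ^ 4*v + 3*b₁*y₁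 ^ 9*y₂ ^ 4*v ^ 2 + 3*b₁*y₁ ^ 9*y₂ ^ 4*u + 4*b₁*y₁ ^ 9*y₂ ^ 5 - 2*b₁*y₁ ^ 10*y₂ ^ 2*u*v - 2*b₁*y₁ ^ 10*y₂ ^ 3*v + b₁*y₁ ^ 10*y₂ ^ 3*v ^ 2 - 2*b₁*y₁ ^ 10*y₂ ^ 3*u*v - 3*b₁*y₁ ^ 10*y₂ ^ 4*v - 2*b₁*b₃*y₁ ^ 8*y₂ ^ 2*u*v - 4*b₁*b₃*y₁ ^ 8*y₂ ^ 3*v - 4*b₁*b₃*y₁ ^ 8*y₂ ^ 3*u*v - 6*b₁*b₃*y₁ ^ 8*y₂ ^ 4*v - b₁*b₃*y₁ ^ 9*y₂ ^ 2*v - 3*b₁*b₃*y₁ ^ 9*y₂ ^ 2*u*v + 3*b₁*b₃*y₁ ^ 9*y₂ ^ 3 - 2*b₁*b₃*y₁ ^ 9*y₂ ^ 3*v + b₁*b₃*y₁ ^ 9*y₂ ^ 3*v ^ 2 + 3*b₁*b₃*y₁ ^ 9*y₂ ^ 3*u - b₁*b₃*y₁ ^ 9*y₂ ^ 3*u*v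 + 5*b₁*b₃*y₁ ^ 9*y₂ ^ 4 - b₁*b₃*y₁ ^ 9*y₂ ^ 4*v - b₁*b₃*y₁ ^ 10*y₂ ^ 2*v - b₁*b₃*y₁ ^ 10*y₂ ^ 2*u*v + b₁*b₃*y₁ ^ 10*y₂ ^ 3 + b₁*b₃*y₁ ^ 10*y₂ ^ 3*u + b₁*b₃*y₁ ^ 10*y₂ ^ 4 - b₁*b₃ ^ 2*y₁ ^ 8*y₂ ^ 2*v - b₁*b₃ ^ 2*y₁ ^ 8*y₂ ^ 2*u*v - 2*b₁*b₃ ^ 2*y₁ ^ 8*y₂ ^ 3*v - b₁*b₃ ^ 2*y₁ ^ 9*y₂ ^ 2*v - b₁*b₃ ^ 2*y₁ ^ 9*y₂ ^ 2*u*v + b₁*b₃ ^ 2*y₁ ^ 9*y₂ ^ 3 - b₁*b₃ ^ 2*y₁ ^ 9*y₂ ^ 3*v + b₁*b₃ ^ 2*y₁ ^ 10*y₂ ^ 3 - b₁ ^ 2*y₁ ^ 7*y₂ ^ 3*u*v - 3*b₁ ^ 2*y₁ ^ 7*y₂ ^ 4*v - 3*b₁ ^ 2*y₁ ^ 7*y₂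 ^ 4*u*v - 6*b₁ ^ 2*y₁ ^ 7*y₂ ^ 5*v - b₁ ^ 2*y₁ ^ 8*y₂ ^ 2*u*v - 2*b₁ ^ 2*y₁ ^ 8*y₂ ^ 3*v + b₁ ^ 2*y₁ ^ 8*y₂ ^ 3*v ^ 2 + b₁ ^ 2*y₁ ^ 8*y₂ ^ 3*u - 2*b₁ ^ 2*y₁ ^ 8*y₂ ^ 3*u*v + b₁ ^ 2*y₁ ^ 8*y₂ ^ 3*u*v ^ 2 + b₁ ^ 2*y₁ ^ 8*y₂ ^ 3*u ^ 2 + b₁ ^ 2*y₁ ^ 8*y₂ ^ 3*u ^ 2*v + 3*b₁ ^ 2*y₁ ^ 8*y₂ ^ 4 - 3*b₁ ^ 2*y₁ ^ 8*y₂ ^ 4*v + 3*b₁ ^ 2*y₁ ^ 8*y₂ ^ 4*v ^ 2 + 3*b₁ ^ 2*y₁ ^ 8*y₂ ^ 4*u + 6*b₁ ^ 2*y₁ ^ 8*y₂ ^ 5 - b₁ ^ 2*y₁ ^ 9*y₂ ^ 2*u*v - b₁ ^ 2*y₁ ^ 9*y₂ ^ 3*v + 2*b₁ ^ 2*y₁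 ^ 9*y₂ ^ 3*v ^ 2 - b₁ ^ 2*y₁ ^ 9*y₂ ^ 3*u*v - 3*b₁ ^ 2*y₁ ^ 9*y₂ ^ 4*v - b₁ ^ 2*b₃*y₁ ^ 7*y₂ ^ 2*u*v - 5*b₁ ^ 2*b₃*y₁ ^ 7*y₂ ^ 3*v - 5*b₁ ^ 2*b₃*y₁ ^ 7*y₂ ^ 3*u*v - 12*b₁ ^ 2*b₃*y₁ ^ 7*y₂ ^ 4*v - 2*b₁ ^ 2*b₃*y₁ ^ 8*y₂ ^ 2*v - 3*b₁ ^ 2*b₃*y₁ ^ 8*y₂ ^ 2*u*v + 3*b₁ ^ 2*b₃*y₁ ^ 8*y₂ ^ 3 - 6*b₁ ^ 2*b₃*y₁ ^ 8*y₂ ^ 3*v + 2*b₁ ^ 2*b₃*y₁ ^ 8*y₂ ^ 3*v ^ 2 + 3*b₁ ^ 2*b₃*y₁ ^ 8*y₂ ^ 3*u - 2*b₁ ^ 2*b₃*y₁ ^ 8*y₂ ^ 3*u*v + 9*b₁ ^ 2*b₃*y₁ ^ 8*y₂ ^ 4 - 3*b₁ ^ 2*b₃*y₁ ^ 8*y₂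 ^ 4*v - 2*b₁ ^ 2*b₃*y₁ ^ 9*y₂ ^ 2*v - 2*b₁ ^ 2*b₃*y₁ ^ 9*y₂ ^ 2*u*v + 2*b₁ ^ 2*b₃*y₁ ^ 9*y₂ ^ 3 - b₁ ^ 2*b₃*y₁ ^ 9*y₂ ^ 3*v + 2*b₁ ^ 2*b₃*y₁ ^ 9*y₂ ^ 3*u + 3*b₁ ^ 2*b₃*y₁ ^ 9*y₂ ^ 4 - 2*b₁ ^ 2*b₃ ^ 2*y₁ ^ 7*y₂ ^ 2*v - 2*b₁ ^ 2*b₃ ^ 2*y₁ ^ 7*y₂ ^ 2*u*v - 7*b₁ ^ 2*b₃ ^ 2*y₁ ^ 7*y₂ ^ 3*v - 3*b₁ ^ 2*b₃ ^ 2*y₁ ^ 8*y₂ ^ 2*v - 2*b₁ ^ 2*b₃ ^ 2*y₁ ^ 8*y₂ ^ 2*u*v + 3*b₁ ^ 2*b₃ ^ 2*y₁ ^ 8*y₂ ^ 3 - 4*b₁ ^ 2*b₃ ^ 2*y₁ ^ 8*y₂ ^ 3*v - b₁ ^ 2*b₃ ^ 2*y₁ ^ 9*y₂ ^ 2*v +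 3*b₁ ^ 2*b₃ ^ 2*y₁ ^ 9*y₂ ^ 3 - b₁ ^ 2*b₃ ^ 3*y₁ ^ 7*y₂ ^ 2*v - b₁ ^ 2*b₃ ^ 3*y₁ ^ 8*y₂ ^ 2*v - b₁ ^ 3*y₁ ^ 6*y₂ ^ 4*v - b₁ ^ 3*y₁ ^ 6*y₂ ^ 4*u*v - 4*b₁ ^ 3*y₁ ^ 6*y₂ ^ 5*v - b₁ ^ 3*y₁ ^ 7*y₂ ^ 3*v - b₁ ^ 3*y₁ ^ 7*y₂ ^ 3*u*v + b₁ ^ 3*y₁ ^ 7*y₂ ^ 4 - 3*b₁ ^ 3*y₁ ^ 7*y₂ ^ 4*v + b₁ ^ 3*y₁ ^ 7*y₂ ^ 4*v ^ 2 + b₁ ^ 3*y₁ ^ 7*y₂ ^ 4*u + 4*b₁ ^ 3*y₁ ^ 7*y₂ ^ 5 + b₁ ^ 3*y₁ ^ 8*y₂ ^ 3*v ^ 2 - b₁ ^ 3*y₁ ^ 8*y₂ ^ 4*v - 2*b₁ ^ 3*b₃*y₁ ^ 6*y₂ ^ 3*v - 2*b₁ ^ 3*b₃*y₁ ^ 6*y₂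 ^ 3*u*v - 10*b₁ ^ 3*b₃*y₁ ^ 6*y₂ ^ 4*v - b₁ ^ 3*b₃*y₁ ^ 7*y₂ ^ 2*v - b₁ ^ 3*b₃*y₁ ^ 7*y₂ ^ 2*u*v + b₁ ^ 3*b₃*y₁ ^ 7*y₂ ^ 3 - 6*b₁ ^ 3*b₃*y₁ ^ 7*y₂ ^ 3*v + b₁ ^ 3*b₃*y₁ ^ 7*y₂ ^ 3*v ^ 2 + b₁ ^ 3*b₃*y₁ ^ 7*y₂ ^ 3*u - b₁ ^ 3*b₃*y₁ ^ 7*y₂ ^ 3*u*v + 7*b₁ ^ 3*b₃*y₁ ^ 7*y₂ ^ 4 - 3*b₁ ^ 3*b₃*y₁ ^ 7*y₂ ^ 4*v - b₁ ^ 3*b₃*y₁ ^ 8*y₂ ^ 2*v - b₁ ^ 3*b₃*y₁ ^ 8*y₂ ^ 2*u*v + b₁ ^ 3*b₃*y₁ ^ 8*y₂ ^ 3 - 2*b₁ ^ 3*b₃*y₁ ^ 8*y₂ ^ 3*v + b₁ ^ 3*b₃*y₁ ^ 8*y₂ ^ 3*u + 3*b₁ ^ 3*b₃*y₁ ^ 8*y₂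 ^ 4 - b₁ ^ 3*b₃ ^ 2*y₁ ^ 6*y₂ ^ 2*v - b₁ ^ 3*b₃ ^ 2*y₁ ^ 6*y₂ ^ 2*u*v - 8*b₁ ^ 3*b₃ ^ 2*y₁ ^ 6*y₂ ^ 3*v - 3*b₁ ^ 3*b₃ ^ 2*y₁ ^ 7*y₂ ^ 2*v - b₁ ^ 3*b₃ ^ 2*y₁ ^ 7*y₂ ^ 2*u*v + 3*b₁ ^ 3*b₃ ^ 2*y₁ ^ 7*y₂ ^ 3 - 5*b₁ ^ 3*b₃ ^ 2*y₁ ^ 7*y₂ ^ 3*v - 2*b₁ ^ 3*b₃ ^ 2*y₁ ^ 8*y₂ ^ 2*v + 3*b₁ ^ 3*b₃ ^ 2*y₁ ^ 8*y₂ ^ 3 - 2*b₁ ^ 3*b₃ ^ 3*y₁ ^ 6*y₂ ^ 2*v - 2*b₁ ^ 3*b₃ ^ 3*y₁ ^ 7*y₂ ^ 2*v - b₁ ^ 4*y₁ ^ 5*y₂ ^ 5*v - b₁ ^ 4*y₁ ^ 6*y₂ ^ 4*v + b₁ ^ 4*y₁ ^ 6*y₂ ^ 5 - 3*b₁ ^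 4*b₃*y₁ ^ 5*y₂ ^ 4*v - 2*b₁ ^ 4*b₃*y₁ ^ 6*y₂ ^ 3*v + 2*b₁ ^ 4*b₃*y₁ ^ 6*y₂ ^ 4 - b₁ ^ 4*b₃*y₁ ^ 6*y₂ ^ 4*v - b₁ ^ 4*b₃*y₁ ^ 7*y₂ ^ 3*v + b₁ ^ 4*b₃*y₁ ^ 7*y₂ ^ 4 - 3*b₁ ^ 4*b₃ ^ 2*y₁ ^ 5*y₂ ^ 3*v - b₁ ^ 4*b₃ ^ 2*y₁ ^ 6*y₂ ^ 2*v + b₁ ^ 4*b₃ ^ 2*y₁ ^ 6*y₂ ^ 3 - 2*b₁ ^ 4*b₃ ^ 2*y₁ ^ 6*y₂ ^ 3*v - b₁ ^ 4*b₃ ^ 2*y₁ ^ 7*y₂ ^ 2*v + b₁ ^ 4*b₃ ^ 2*y₁ ^ 7*y₂ ^ 3 - b₁ ^ 4*b₃ ^ 3*y₁ ^ 5*y₂ ^ 2*v - b₁ ^ 4*b₃ ^ 3*y₁ ^ 6*y₂ ^ 2*v) * h1 + (y₁ ^ 8*y₂ ^ 3*v + y₁ ^ 8*y₂ ^ 4*v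 - y₁ ^ 9*y₂ ^ 3 - y₁ ^ 9*y₂ ^ 4 + 2*b₁*y₁ ^ 7*y₂ ^ 3*v + 3*b₁*y₁ ^ 7*y₂ ^ 4*v + b₁*y₁ ^ 8*y₂ ^ 2*v - 2*b₁*y₁ ^ 8*y₂ ^ 3 + b₁*y₁ ^ 8*y₂ ^ 3*v - 3*b₁*y₁ ^ 8*y₂ ^ 4 + b₁*b₃*y₁ ^ 7*y₂ ^ 2*v + 2*b₁*b₃*y₁ ^ 7*y₂ ^ 3*v - b₁*b₃*y₁ ^ 8*y₂ ^ 3 + b₁ ^ 2*y₁ ^ 6*y₂ ^ 3*v + 3*b₁ ^ 2*y₁ ^ 6*y₂ ^ 4*v + b₁ ^ 2*y₁ ^ 7*y₂ ^ 2*v - b₁ ^ 2*y₁ ^ 7*y₂ ^ 3 + 2*b₁ ^ 2*y₁ ^ 7*y₂ ^ 3*v - 3*b₁ ^ 2*y₁ ^ 7*y₂ ^ 4 + b₁ ^ 2*b₃*y₁ ^ 6*y₂ ^ 2*v + 4*b₁ ^ 2*b₃*y₁ ^ 6*y₂ ^ 3*v + b₁ ^ 2*b₃*y₁ ^ 7*y₂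 ^ 2*v - 2*b₁ ^ 2*b₃*y₁ ^ 7*y₂ ^ 3 + b₁ ^ 2*b₃ ^ 2*y₁ ^ 6*y₂ ^ 2*v + b₁ ^ 3*y₁ ^ 5*y₂ ^ 4*v + b₁ ^ 3*y₁ ^ 6*y₂ ^ 3*v - b₁ ^ 3*y₁ ^ 6*y₂ ^ 4 + 2*b₁ ^ 3*b₃*y₁ ^ 5*y₂ ^ 3*v + b₁ ^ 3*b₃*y₁ ^ 6*y₂ ^ 2*v - b₁ ^ 3*b₃*y₁ ^ 6*y₂ ^ 3 + b₁ ^ 3*b₃ ^ 2*y₁ ^ 5*y₂ ^ 2*v) * h2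
  · linear_combination (- y₁ ^ 9*y₂ ^ 3*u*v - y₁ ^ 9*y₂ ^ 4*v - y₁ ^ 9*y₂ ^ 4*u*v - y₁ ^ 9*y₂ ^ 5*v - y₁ ^ 10*y₂ ^ 2*u*v + y₁ ^ 10*y₂ ^ 3*v ^ 2 + y₁ ^ 10*y₂ ^ 3*u + y₁ ^ 10*y₂ ^ 3*u*v ^ 2 + y₁ ^ 10*y₂ ^ 3*u ^ 2 + y₁ ^ 10*y₂ ^ 3*u ^ 2*v + y₁ ^ 10*y₂ ^ 4 + y₁ ^ 10*y₂ ^ 4*v ^ 2 + y₁ ^ 10*y₂ ^ 4*u + y₁ ^ 10*y₂ ^ 5 - y₁ ^ 11*y₂ ^ 2*u*v - y₁ ^ 11*y₂ ^ 3*v - y₁ ^ 11*y₂ ^ 3*u*v - y₁ ^ 11*y₂ ^ 4*v - b₄*y₁ ^ 9*y₂ ^ 2*u*v - b₄*y₁ ^ 9*y₂ ^ 3*v - b₄*y₁ ^ 9*y₂ ^ 3*u*v - b₄*y₁ ^ 9*y₂ ^ 4*v - b₄*y₁ ^ 10*y₂ ^ 2*u*v + b₄*y₁ ^ 10*y₂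 ^ 3 + b₄*y₁ ^ 10*y₂ ^ 3*u + b₄*y₁ ^ 10*y₂ ^ 4 - b₃*y₁ ^ 9*y₂ ^ 2*u*v - b₃*y₁ ^ 9*y₂ ^ 3*v - b₃*y₁ ^ 9*y₂ ^ 3*u*v - b₃*y₁ ^ 9*y₂ ^ 4*v - b₃*y₁ ^ 10*y₂ ^ 2*u*v + b₃*y₁ ^ 10*y₂ ^ 3 + b₃*y₁ ^ 10*y₂ ^ 3*u + b₃*y₁ ^ 10*y₂ ^ 4 - b₃*b₄*y₁ ^ 8*y₂ ^ 2*u*v - 2*b₃*b₄*y₁ ^ 8*y₂ ^ 3*v - 4*b₃*b₄*y₁ ^ 8*y₂ ^ 3*u*v - 6*b₃*b₄*y₁ ^ 8*y₂ ^ 4*v - 3*b₃*b₄*y₁ ^ 8*y₂ ^ 4*u*v - 4*b₃*b₄*y₁ ^ 8*y₂ ^ 5*v - b₃*b₄*y₁ ^ 9*y₂ ^ 2*v - 3*b₃*b₄*y₁ ^ 9*y₂ ^ 2*u*v + b₃*b₄*y₁ ^ 9*y₂ ^ 3 - 2*b₃*b₄*y₁ ^ 9*y₂ ^ 3*v + 3*b₃*b₄*y₁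 ^ 9*y₂ ^ 3*v ^ 2 + 3*b₃*b₄*y₁ ^ 9*y₂ ^ 3*u - b₃*b₄*y₁ ^ 9*y₂ ^ 3*u*v + 2*b₃*b₄*y₁ ^ 9*y₂ ^ 3*u*v ^ 2 + 2*b₃*b₄*y₁ ^ 9*y₂ ^ 3*u ^ 2 + 2*b₃*b₄*y₁ ^ 9*y₂ ^ 3*u ^ 2*v + 5*b₃*b₄*y₁ ^ 9*y₂ ^ 4 - b₃*b₄*y₁ ^ 9*y₂ ^ 4*v + 3*b₃*b₄*y₁ ^ 9*y₂ ^ 4*v ^ 2 + 3*b₃*b₄*y₁ ^ 9*y₂ ^ 4*u + 4*b₃*b₄*y₁ ^ 9*y₂ ^ 5 - b₃*b₄*y₁ ^ 10*y₂ ^ 2*v - 2*b₃*b₄*y₁ ^ 10*y₂ ^ 2*u*v + b₃*b₄*y₁ ^ 10*y₂ ^ 3 - 2*b₃*b₄*y₁ ^ 10*y₂ ^ 3*v + b₃*b₄*y₁ ^ 10*y₂ ^ 3*v ^ 2 - 2*b₃*b₄*y₁ ^ 10*y₂ ^ 3*u*v - 3*b₃*b₄*y₁ ^ 10*y₂ ^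 4*v - b₃*b₄ ^ 2*y₁ ^ 8*y₂ ^ 2*v - 2*b₃*b₄ ^ 2*y₁ ^ 8*y₂ ^ 2*u*v - 4*b₃*b₄ ^ 2*y₁ ^ 8*y₂ ^ 3*v - 2*b₃*b₄ ^ 2*y₁ ^ 8*y₂ ^ 3*u*v - 3*b₃*b₄ ^ 2*y₁ ^ 8*y₂ ^ 4*v - b₃*b₄ ^ 2*y₁ ^ 9*y₂ ^ 2*v - 2*b₃*b₄ ^ 2*y₁ ^ 9*y₂ ^ 2*u*v + 3*b₃*b₄ ^ 2*y₁ ^ 9*y₂ ^ 3 - b₃*b₄ ^ 2*y₁ ^ 9*y₂ ^ 3*v + 2*b₃*b₄ ^ 2*y₁ ^ 9*y₂ ^ 3*u + 3*b₃*b₄ ^ 2*y₁ ^ 9*y₂ ^ 4 - b₃ ^ 2*b₄*y₁ ^ 8*y₂ ^ 2*v - 2*b₃ ^ 2*b₄*y₁ ^ 8*y₂ ^ 2*u*v - 4*b₃ ^ 2*b₄*y₁ ^ 8*y₂ ^ 3*v - 2*b₃ ^ 2*b₄*y₁ ^ 8*y₂ ^ 3*u*v - 3*b₃ ^ 2*b₄*y₁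 ^ 8*y₂ ^ 4*v - b₃ ^ 2*b₄*y₁ ^ 9*y₂ ^ 2*v - 2*b₃ ^ 2*b₄*y₁ ^ 9*y₂ ^ 2*u*v + 3*b₃ ^ 2*b₄*y₁ ^ 9*y₂ ^ 3 - b₃ ^ 2*b₄*y₁ ^ 9*y₂ ^ 3*v + 2*b₃ ^ 2*b₄*y₁ ^ 9*y₂ ^ 3*u + 3*b₃ ^ 2*b₄*y₁ ^ 9*y₂ ^ 4 - b₃ ^ 2*b₄ ^ 2*y₁ ^ 7*y₂ ^ 2*v - 2*b₃ ^ 2*b₄ ^ 2*y₁ ^ 7*y₂ ^ 2*u*v - 7*b₃ ^ 2*b₄ ^ 2*y₁ ^ 7*y₂ ^ 3*v - 5*b₃ ^ 2*b₄ ^ 2*y₁ ^ 7*y₂ ^ 3*u*v - 12*b₃ ^ 2*b₄ ^ 2*y₁ ^ 7*y₂ ^ 4*v - 3*b₃ ^ 2*b₄ ^ 2*y₁ ^ 7*y₂ ^ 4*u*v - 6*b₃ ^ 2*b₄ ^ 2*y₁ ^ 7*y₂ ^ 5*v - 3*b₃ ^ 2*b₄ ^ 2*y₁ ^ 8*y₂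 ^ 2*v - 3*b₃ ^ 2*b₄ ^ 2*y₁ ^ 8*y₂ ^ 2*u*v + 3*b₃ ^ 2*b₄ ^ 2*y₁ ^ 8*y₂ ^ 3 - 6*b₃ ^ 2*b₄ ^ 2*y₁ ^ 8*y₂ ^ 3*v + 3*b₃ ^ 2*b₄ ^ 2*y₁ ^ 8*y₂ ^ 3*v ^ 2 + 3*b₃ ^ 2*b₄ ^ 2*y₁ ^ 8*y₂ ^ 3*u - 2*b₃ ^ 2*b₄ ^ 2*y₁ ^ 8*y₂ ^ 3*u*v + b₃ ^ 2*b₄ ^ 2*y₁ ^ 8*y₂ ^ 3*u*v ^ 2 + b₃ ^ 2*b₄ ^ 2*y₁ ^ 8*y₂ ^ 3*u ^ 2 + b₃ ^ 2*b₄ ^ 2*y₁ ^ 8*y₂ ^ 3*u ^ 2*v + 9*b₃ ^ 2*b₄ ^ 2*y₁ ^ 8*y₂ ^ 4 - 3*b₃ ^ 2*b₄ ^ 2*y₁ ^ 8*y₂ ^ 4*v + 3*b₃ ^ 2*b₄ ^ 2*y₁ ^ 8*y₂ ^ 4*v ^ 2 + 3*b₃ ^ 2*b₄ ^ 2*y₁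 ^ 8*y₂ ^ 4*u + 6*b₃ ^ 2*b₄ ^ 2*y₁ ^ 8*y₂ ^ 5 - 2*b₃ ^ 2*b₄ ^ 2*y₁ ^ 9*y₂ ^ 2*v - b₃ ^ 2*b₄ ^ 2*y₁ ^ 9*y₂ ^ 2*u*v + 2*b₃ ^ 2*b₄ ^ 2*y₁ ^ 9*y₂ ^ 3 - b₃ ^ 2*b₄ ^ 2*y₁ ^ 9*y₂ ^ 3*v + 2*b₃ ^ 2*b₄ ^ 2*y₁ ^ 9*y₂ ^ 3*v ^ 2 - b₃ ^ 2*b₄ ^ 2*y₁ ^ 9*y₂ ^ 3*u*v - 3*b₃ ^ 2*b₄ ^ 2*y₁ ^ 9*y₂ ^ 4*v - 2*b₃ ^ 2*b₄ ^ 3*y₁ ^ 7*y₂ ^ 2*v - b₃ ^ 2*b₄ ^ 3*y₁ ^ 7*y₂ ^ 2*u*v - 5*b₃ ^ 2*b₄ ^ 3*y₁ ^ 7*y₂ ^ 3*v - b₃ ^ 2*b₄ ^ 3*y₁ ^ 7*y₂ ^ 3*u*v - 3*b₃ ^ 2*b₄ ^ 3*y₁ ^ 7*y₂ ^ 4*v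 - 2*b₃ ^ 2*b₄ ^ 3*y₁ ^ 8*y₂ ^ 2*v - b₃ ^ 2*b₄ ^ 3*y₁ ^ 8*y₂ ^ 2*u*v + 3*b₃ ^ 2*b₄ ^ 3*y₁ ^ 8*y₂ ^ 3 - 2*b₃ ^ 2*b₄ ^ 3*y₁ ^ 8*y₂ ^ 3*v + b₃ ^ 2*b₄ ^ 3*y₁ ^ 8*y₂ ^ 3*u + 3*b₃ ^ 2*b₄ ^ 3*y₁ ^ 8*y₂ ^ 4 - 2*b₃ ^ 3*b₄ ^ 2*y₁ ^ 7*y₂ ^ 2*v - b₃ ^ 3*b₄ ^ 2*y₁ ^ 7*y₂ ^ 2*u*v - 5*b₃ ^ 3*b₄ ^ 2*y₁ ^ 7*y₂ ^ 3*v - b₃ ^ 3*b₄ ^ 2*y₁ ^ 7*y₂ ^ 3*u*v - 3*b₃ ^ 3*b₄ ^ 2*y₁ ^ 7*y₂ ^ 4*v - 2*b₃ ^ 3*b₄ ^ 2*y₁ ^ 8*y₂ ^ 2*v - b₃ ^ 3*b₄ ^ 2*y₁ ^ 8*y₂ ^ 2*u*v + 3*b₃ ^ 3*b₄ ^ 2*y₁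 ^ 8*y₂ ^ 3 - 2*b₃ ^ 3*b₄ ^ 2*y₁ ^ 8*y₂ ^ 3*v + b₃ ^ 3*b₄ ^ 2*y₁ ^ 8*y₂ ^ 3*u + 3*b₃ ^ 3*b₄ ^ 2*y₁ ^ 8*y₂ ^ 4 - 2*b₃ ^ 3*b₄ ^ 3*y₁ ^ 6*y₂ ^ 2*v - b₃ ^ 3*b₄ ^ 3*y₁ ^ 6*y₂ ^ 2*u*v - 8*b₃ ^ 3*b₄ ^ 3*y₁ ^ 6*y₂ ^ 3*v - 2*b₃ ^ 3*b₄ ^ 3*y₁ ^ 6*y₂ ^ 3*u*v - 10*b₃ ^ 3*b₄ ^ 3*y₁ ^ 6*y₂ ^ 4*v - b₃ ^ 3*b₄ ^ 3*y₁ ^ 6*y₂ ^ 4*u*v - 4*b₃ ^ 3*b₄ ^ 3*y₁ ^ 6*y₂ ^ 5*v - 3*b₃ ^ 3*b₄ ^ 3*y₁ ^ 7*y₂ ^ 2*v - b₃ ^ 3*b₄ ^ 3*y₁ ^ 7*y₂ ^ 2*u*v + 3*b₃ ^ 3*b₄ ^ 3*y₁ ^ 7*y₂ ^ 3 - 6*b₃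 ^ 3*b₄ ^ 3*y₁ ^ 7*y₂ ^ 3*v + b₃ ^ 3*b₄ ^ 3*y₁ ^ 7*y₂ ^ 3*v ^ 2 + b₃ ^ 3*b₄ ^ 3*y₁ ^ 7*y₂ ^ 3*u - b₃ ^ 3*b₄ ^ 3*y₁ ^ 7*y₂ ^ 3*u*v + 7*b₃ ^ 3*b₄ ^ 3*y₁ ^ 7*y₂ ^ 4 - 3*b₃ ^ 3*b₄ ^ 3*y₁ ^ 7*y₂ ^ 4*v + b₃ ^ 3*b₄ ^ 3*y₁ ^ 7*y₂ ^ 4*v ^ 2 + b₃ ^ 3*b₄ ^ 3*y₁ ^ 7*y₂ ^ 4*u + 4*b₃ ^ 3*b₄ ^ 3*y₁ ^ 7*y₂ ^ 5 - b₃ ^ 3*b₄ ^ 3*y₁ ^ 8*y₂ ^ 2*v + b₃ ^ 3*b₄ ^ 3*y₁ ^ 8*y₂ ^ 3 + b₃ ^ 3*b₄ ^ 3*y₁ ^ 8*y₂ ^ 3*v ^ 2 - b₃ ^ 3*b₄ ^ 3*y₁ ^ 8*y₂ ^ 4*v - b₃ ^ 3*b₄ ^ 4*y₁ ^ 6*y₂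 ^ 2*v - 2*b₃ ^ 3*b₄ ^ 4*y₁ ^ 6*y₂ ^ 3*v - b₃ ^ 3*b₄ ^ 4*y₁ ^ 6*y₂ ^ 4*v - b₃ ^ 3*b₄ ^ 4*y₁ ^ 7*y₂ ^ 2*v + b₃ ^ 3*b₄ ^ 4*y₁ ^ 7*y₂ ^ 3 - b₃ ^ 3*b₄ ^ 4*y₁ ^ 7*y₂ ^ 3*v + b₃ ^ 3*b₄ ^ 4*y₁ ^ 7*y₂ ^ 4 - b₃ ^ 4*b₄ ^ 3*y₁ ^ 6*y₂ ^ 2*v - 2*b₃ ^ 4*b₄ ^ 3*y₁ ^ 6*y₂ ^ 3*v - b₃ ^ 4*b₄ ^ 3*y₁ ^ 6*y₂ ^ 4*v - b₃ ^ 4*b₄ ^ 3*y₁ ^ 7*y₂ ^ 2*v + b₃ ^ 4*b₄ ^ 3*y₁ ^ 7*y₂ ^ 3 - b₃ ^ 4*b₄ ^ 3*y₁ ^ 7*y₂ ^ 3*v + b₃ ^ 4*b₄ ^ 3*y₁ ^ 7*y₂ ^ 4 - b₃ ^ 4*b₄ ^ 4*y₁ ^ 5*y₂ ^ 2*v - 3*b₃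 ^ 4*b₄ ^ 4*y₁ ^ 5*y₂ ^ 3*v - 3*b₃ ^ 4*b₄ ^ 4*y₁ ^ 5*y₂ ^ 4*v - b₃ ^ 4*b₄ ^ 4*y₁ ^ 5*y₂ ^ 5*v - b₃ ^ 4*b₄ ^ 4*y₁ ^ 6*y₂ ^ 2*v + b₃ ^ 4*b₄ ^ 4*y₁ ^ 6*y₂ ^ 3 - 2*b₃ ^ 4*b₄ ^ 4*y₁ ^ 6*y₂ ^ 3*v + 2*b₃ ^ 4*b₄ ^ 4*y₁ ^ 6*y₂ ^ 4 - b₃ ^ 4*b₄ ^ 4*y₁ ^ 6*y₂ ^ 4*v + b₃ ^ 4*b₄ ^ 4*y₁ ^ 6*y₂ ^ 5) * h1 + (y₁ ^ 8*y₂ ^ 3*v + y₁ ^ 8*y₂ ^ 4*v - y₁ ^ 9*y₂ ^ 3 - y₁ ^ 9*y₂ ^ 4 + b₃*b₄*y₁ ^ 7*y₂ ^ 2*v + 4*b₃*b₄*y₁ ^ 7*y₂ ^ 3*v + 3*b₃*b₄*y₁ ^ 7*y₂ ^ 4*v + b₃*b₄*y₁ ^ 8*y₂ ^ 2*v - 3*b₃*b₄*y₁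 ^ 8*y₂ ^ 3 + b₃*b₄*y₁ ^ 8*y₂ ^ 3*v - 3*b₃*b₄*y₁ ^ 8*y₂ ^ 4 + 2*b₃ ^ 2*b₄ ^ 2*y₁ ^ 6*y₂ ^ 2*v + 5*b₃ ^ 2*b₄ ^ 2*y₁ ^ 6*y₂ ^ 3*v + 3*b₃ ^ 2*b₄ ^ 2*y₁ ^ 6*y₂ ^ 4*v + 2*b₃ ^ 2*b₄ ^ 2*y₁ ^ 7*y₂ ^ 2*v - 3*b₃ ^ 2*b₄ ^ 2*y₁ ^ 7*y₂ ^ 3 + 2*b₃ ^ 2*b₄ ^ 2*y₁ ^ 7*y₂ ^ 3*v - 3*b₃ ^ 2*b₄ ^ 2*y₁ ^ 7*y₂ ^ 4 + b₃ ^ 3*b₄ ^ 3*y₁ ^ 5*y₂ ^ 2*v + 2*b₃ ^ 3*b₄ ^ 3*y₁ ^ 5*y₂ ^ 3*v + b₃ ^ 3*b₄ ^ 3*y₁ ^ 5*y₂ ^ 4*v + b₃ ^ 3*b₄ ^ 3*y₁ ^ 6*y₂ ^ 2*v - b₃ ^ 3*b₄ ^ 3*y₁ ^ 6*y₂ ^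 3 + b₃ ^ 3*b₄ ^ 3*y₁ ^ 6*y₂ ^ 3*v - b₃ ^ 3*b₄ ^ 3*y₁ ^ 6*y₂ ^ 4) * h2
  · linear_combination (- y₁ ^ 9*y₂ ^ 3*u*v - y₁ ^ 9*y₂ ^ 4*v - y₁ ^ 9*y₂ ^ 4*u*v - y₁ ^ 9*y₂ ^ 5*v - y₁ ^ 10*y₂ ^ 2*u*v + y₁ ^ 10*y₂ ^ 3*v ^ 2 + y₁ ^ 10*y₂ ^ 3*u + y₁ ^ 10*y₂ ^ 3*u*v ^ 2 + y₁ ^ 10*y₂ ^ 3*u ^ 2 + y₁ ^ 10*y₂ ^ 3*u ^ 2*v + y₁ ^ 10*y₂ ^ 4 + y₁ ^ 10*y₂ ^ 4*v ^ 2 + y₁ ^ 10*y₂ ^ 4*u + y₁ ^ 10*y₂ ^ 5 - y₁ ^ 11*y₂ ^ 2*u*v - y₁ ^ 11*y₂ ^ 3*v - y₁ ^ 11*y₂ ^ 3*u*v - y₁ ^ 11*y₂ ^ 4*v - b₄*y₁ ^ 9*y₂ ^ 2*u*v - b₄*y₁ ^ 9*y₂ ^ 3*v - b₄*y₁ ^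 9*y₂ ^ 3*u*v - b₄*y₁ ^ 9*y₂ ^ 4*v - b₄*y₁ ^ 10*y₂ ^ 2*u*v + b₄*y₁ ^ 10*y₂ ^ 3 + b₄*y₁ ^ 10*y₂ ^ 3*u + b₄*y₁ ^ 10*y₂ ^ 4 - 2*b₁*y₁ ^ 8*y₂ ^ 3*u*v - 3*b₁*y₁ ^ 8*y₂ ^ 4*v - 3*b₁*y₁ ^ 8*y₂ ^ 4*u*v - 4*b₁*y₁ ^ 8*y₂ ^ 5*v - 2*b₁*y₁ ^ 9*y₂ ^ 2*u*v - b₁*y₁ ^ 9*y₂ ^ 3*v + 2*b₁*y₁ ^ 9*y₂ ^ 3*v ^ 2 + 2*b₁*y₁ ^ 9*y₂ ^ 3*u - b₁*y₁ ^ 9*y₂ ^ 3*u*v + 2*b₁*y₁ ^ 9*y₂ ^ 3*u*v ^ 2 + 2*b₁*y₁ ^ 9*y₂ ^ 3*u ^ 2 + 2*b₁*y₁ ^ 9*y₂ ^ 3*u ^ 2*v + 3*b₁*y₁ ^ 9*y₂ ^ 4 - b₁*y₁ ^ 9*y₂ ^ 4*v + 3*b₁*y₁ ^ 9*y₂ ^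 4*v ^ 2 + 3*b₁*y₁ ^ 9*y₂ ^ 4*u + 4*b₁*y₁ ^ 9*y₂ ^ 5 - 2*b₁*y₁ ^ 10*y₂ ^ 2*u*v - 2*b₁*y₁ ^ 10*y₂ ^ 3*v + b₁*y₁ ^ 10*y₂ ^ 3*v ^ 2 - 2*b₁*y₁ ^ 10*y₂ ^ 3*u*v - 3*b₁*y₁ ^ 10*y₂ ^ 4*v - 2*b₁*b₄*y₁ ^ 8*y₂ ^ 2*u*v - 4*b₁*b₄*y₁ ^ 8*y₂ ^ 3*v - 4*b₁*b₄*y₁ ^ 8*y₂ ^ 3*u*v - 6*b₁*b₄*y₁ ^ 8*y₂ ^ 4*v - b₁*b₄*y₁ ^ 9*y₂ ^ 2*v - 3*b₁*b₄*y₁ ^ 9*y₂ ^ 2*u*v + 3*b₁*b₄*y₁ ^ 9*y₂ ^ 3 - 2*b₁*b₄*y₁ ^ 9*y₂ ^ 3*v + b₁*b₄*y₁ ^ 9*y₂ ^ 3*v ^ 2 + 3*b₁*b₄*y₁ ^ 9*y₂ ^ 3*u - b₁*b₄*y₁ ^ 9*y₂ ^ 3*u*v + 5*b₁*b₄*y₁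 ^ 9*y₂ ^ 4 - b₁*b₄*y₁ ^ 9*y₂ ^ 4*v - b₁*b₄*y₁ ^ 10*y₂ ^ 2*v - b₁*b₄*y₁ ^ 10*y₂ ^ 2*u*v + b₁*b₄*y₁ ^ 10*y₂ ^ 3 + b₁*b₄*y₁ ^ 10*y₂ ^ 3*u + b₁*b₄*y₁ ^ 10*y₂ ^ 4 - b₁*b₄ ^ 2*y₁ ^ 8*y₂ ^ 2*v - b₁*b₄ ^ 2*y₁ ^ 8*y₂ ^ 2*u*v - 2*b₁*b₄ ^ 2*y₁ ^ 8*y₂ ^ 3*v - b₁*b₄ ^ 2*y₁ ^ 9*y₂ ^ 2*v - b₁*b₄ ^ 2*y₁ ^ 9*y₂ ^ 2*u*v + b₁*b₄ ^ 2*y₁ ^ 9*y₂ ^ 3 - b₁*b₄ ^ 2*y₁ ^ 9*y₂ ^ 3*v + b₁*b₄ ^ 2*y₁ ^ 10*y₂ ^ 3 - b₁ ^ 2*y₁ ^ 7*y₂ ^ 3*u*v - 3*b₁ ^ 2*y₁ ^ 7*y₂ ^ 4*v - 3*b₁ ^ 2*y₁ ^ 7*y₂ ^ 4*u*v - 6*b₁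 ^ 2*y₁ ^ 7*y₂ ^ 5*v - b₁ ^ 2*y₁ ^ 8*y₂ ^ 2*u*v - 2*b₁ ^ 2*y₁ ^ 8*y₂ ^ 3*v + b₁ ^ 2*y₁ ^ 8*y₂ ^ 3*v ^ 2 + b₁ ^ 2*y₁ ^ 8*y₂ ^ 3*u - 2*b₁ ^ 2*y₁ ^ 8*y₂ ^ 3*u*v + b₁ ^ 2*y₁ ^ 8*y₂ ^ 3*u*v ^ 2 + b₁ ^ 2*y₁ ^ 8*y₂ ^ 3*u ^ 2 + b₁ ^ 2*y₁ ^ 8*y₂ ^ 3*u ^ 2*v + 3*b₁ ^ 2*y₁ ^ 8*y₂ ^ 4 - 3*b₁ ^ 2*y₁ ^ 8*y₂ ^ 4*v + 3*b₁ ^ 2*y₁ ^ 8*y₂ ^ 4*v ^ 2 + 3*b₁ ^ 2*y₁ ^ 8*y₂ ^ 4*u + 6*b₁ ^ 2*y₁ ^ 8*y₂ ^ 5 - b₁ ^ 2*y₁ ^ 9*y₂ ^ 2*u*v - b₁ ^ 2*y₁ ^ 9*y₂ ^ 3*v + 2*b₁ ^ 2*y₁ ^ 9*y₂ ^ 3*v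 ^ 2 - b₁ ^ 2*y₁ ^ 9*y₂ ^ 3*u*v - 3*b₁ ^ 2*y₁ ^ 9*y₂ ^ 4*v - b₁ ^ 2*b₄*y₁ ^ 7*y₂ ^ 2*u*v - 5*b₁ ^ 2*b₄*y₁ ^ 7*y₂ ^ 3*v - 5*b₁ ^ 2*b₄*y₁ ^ 7*y₂ ^ 3*u*v - 12*b₁ ^ 2*b₄*y₁ ^ 7*y₂ ^ 4*v - 2*b₁ ^ 2*b₄*y₁ ^ 8*y₂ ^ 2*v - 3*b₁ ^ 2*b₄*y₁ ^ 8*y₂ ^ 2*u*v + 3*b₁ ^ 2*b₄*y₁ ^ 8*y₂ ^ 3 - 6*b₁ ^ 2*b₄*y₁ ^ 8*y₂ ^ 3*v + 2*b₁ ^ 2*b₄*y₁ ^ 8*y₂ ^ 3*v ^ 2 + 3*b₁ ^ 2*b₄*y₁ ^ 8*y₂ ^ 3*u - 2*b₁ ^ 2*b₄*y₁ ^ 8*y₂ ^ 3*u*v + 9*b₁ ^ 2*b₄*y₁ ^ 8*y₂ ^ 4 - 3*b₁ ^ 2*b₄*y₁ ^ 8*y₂ ^ 4*v - 2*b₁ ^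 2*b₄*y₁ ^ 9*y₂ ^ 2*v - 2*b₁ ^ 2*b₄*y₁ ^ 9*y₂ ^ 2*u*v + 2*b₁ ^ 2*b₄*y₁ ^ 9*y₂ ^ 3 - b₁ ^ 2*b₄*y₁ ^ 9*y₂ ^ 3*v + 2*b₁ ^ 2*b₄*y₁ ^ 9*y₂ ^ 3*u + 3*b₁ ^ 2*b₄*y₁ ^ 9*y₂ ^ 4 - 2*b₁ ^ 2*b₄ ^ 2*y₁ ^ 7*y₂ ^ 2*v - 2*b₁ ^ 2*b₄ ^ 2*y₁ ^ 7*y₂ ^ 2*u*v - 7*b₁ ^ 2*b₄ ^ 2*y₁ ^ 7*y₂ ^ 3*v - 3*b₁ ^ 2*b₄ ^ 2*y₁ ^ 8*y₂ ^ 2*v - 2*b₁ ^ 2*b₄ ^ 2*y₁ ^ 8*y₂ ^ 2*u*v + 3*b₁ ^ 2*b₄ ^ 2*y₁ ^ 8*y₂ ^ 3 - 4*b₁ ^ 2*b₄ ^ 2*y₁ ^ 8*y₂ ^ 3*v - b₁ ^ 2*b₄ ^ 2*y₁ ^ 9*y₂ ^ 2*v + 3*b₁ ^ 2*b₄ ^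 2*y₁ ^ 9*y₂ ^ 3 - b₁ ^ 2*b₄ ^ 3*y₁ ^ 7*y₂ ^ 2*v - b₁ ^ 2*b₄ ^ 3*y₁ ^ 8*y₂ ^ 2*v - b₁ ^ 3*y₁ ^ 6*y₂ ^ 4*v - b₁ ^ 3*y₁ ^ 6*y₂ ^ 4*u*v - 4*b₁ ^ 3*y₁ ^ 6*y₂ ^ 5*v - b₁ ^ 3*y₁ ^ 7*y₂ ^ 3*v - b₁ ^ 3*y₁ ^ 7*y₂ ^ 3*u*v + b₁ ^ 3*y₁ ^ 7*y₂ ^ 4 - 3*b₁ ^ 3*y₁ ^ 7*y₂ ^ 4*v + b₁ ^ 3*y₁ ^ 7*y₂ ^ 4*v ^ 2 + b₁ ^ 3*y₁ ^ 7*y₂ ^ 4*u + 4*b₁ ^ 3*y₁ ^ 7*y₂ ^ 5 + b₁ ^ 3*y₁ ^ 8*y₂ ^ 3*v ^ 2 - b₁ ^ 3*y₁ ^ 8*y₂ ^ 4*v - 2*b₁ ^ 3*b₄*y₁ ^ 6*y₂ ^ 3*v - 2*b₁ ^ 3*b₄*y₁ ^ 6*y₂ ^ 3*u*v - 10*b₁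 ^ 3*b₄*y₁ ^ 6*y₂ ^ 4*v - b₁ ^ 3*b₄*y₁ ^ 7*y₂ ^ 2*v - b₁ ^ 3*b₄*y₁ ^ 7*y₂ ^ 2*u*v + b₁ ^ 3*b₄*y₁ ^ 7*y₂ ^ 3 - 6*b₁ ^ 3*b₄*y₁ ^ 7*y₂ ^ 3*v + b₁ ^ 3*b₄*y₁ ^ 7*y₂ ^ 3*v ^ 2 + b₁ ^ 3*b₄*y₁ ^ 7*y₂ ^ 3*u - b₁ ^ 3*b₄*y₁ ^ 7*y₂ ^ 3*u*v + 7*b₁ ^ 3*b₄*y₁ ^ 7*y₂ ^ 4 - 3*b₁ ^ 3*b₄*y₁ ^ 7*y₂ ^ 4*v - b₁ ^ 3*b₄*y₁ ^ 8*y₂ ^ 2*v - b₁ ^ 3*b₄*y₁ ^ 8*y₂ ^ 2*u*v + b₁ ^ 3*b₄*y₁ ^ 8*y₂ ^ 3 - 2*b₁ ^ 3*b₄*y₁ ^ 8*y₂ ^ 3*v + b₁ ^ 3*b₄*y₁ ^ 8*y₂ ^ 3*u + 3*b₁ ^ 3*b₄*y₁ ^ 8*y₂ ^ 4 - b₁ ^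 3*b₄ ^ 2*y₁ ^ 6*y₂ ^ 2*v - b₁ ^ 3*b₄ ^ 2*y₁ ^ 6*y₂ ^ 2*u*v - 8*b₁ ^ 3*b₄ ^ 2*y₁ ^ 6*y₂ ^ 3*v - 3*b₁ ^ 3*b₄ ^ 2*y₁ ^ 7*y₂ ^ 2*v - b₁ ^ 3*b₄ ^ 2*y₁ ^ 7*y₂ ^ 2*u*v + 3*b₁ ^ 3*b₄ ^ 2*y₁ ^ 7*y₂ ^ 3 - 5*b₁ ^ 3*b₄ ^ 2*y₁ ^ 7*y₂ ^ 3*v - 2*b₁ ^ 3*b₄ ^ 2*y₁ ^ 8*y₂ ^ 2*v + 3*b₁ ^ 3*b₄ ^ 2*y₁ ^ 8*y₂ ^ 3 - 2*b₁ ^ 3*b₄ ^ 3*y₁ ^ 6*y₂ ^ 2*v - 2*b₁ ^ 3*b₄ ^ 3*y₁ ^ 7*y₂ ^ 2*v - b₁ ^ 4*y₁ ^ 5*y₂ ^ 5*v - b₁ ^ 4*y₁ ^ 6*y₂ ^ 4*v + b₁ ^ 4*y₁ ^ 6*y₂ ^ 5 - 3*b₁ ^ 4*b₄*y₁ ^ 5*y₂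 ^ 4*v - 2*b₁ ^ 4*b₄*y₁ ^ 6*y₂ ^ 3*v + 2*b₁ ^ 4*b₄*y₁ ^ 6*y₂ ^ 4 - b₁ ^ 4*b₄*y₁ ^ 6*y₂ ^ 4*v - b₁ ^ 4*b₄*y₁ ^ 7*y₂ ^ 3*v + b₁ ^ 4*b₄*y₁ ^ 7*y₂ ^ 4 - 3*b₁ ^ 4*b₄ ^ 2*y₁ ^ 5*y₂ ^ 3*v - b₁ ^ 4*b₄ ^ 2*y₁ ^ 6*y₂ ^ 2*v + b₁ ^ 4*b₄ ^ 2*y₁ ^ 6*y₂ ^ 3 - 2*b₁ ^ 4*b₄ ^ 2*y₁ ^ 6*y₂ ^ 3*v - b₁ ^ 4*b₄ ^ 2*y₁ ^ 7*y₂ ^ 2*v + b₁ ^ 4*b₄ ^ 2*y₁ ^ 7*y₂ ^ 3 - b₁ ^ 4*b₄ ^ 3*y₁ ^ 5*y₂ ^ 2*v - b₁ ^ 4*b₄ ^ 3*y₁ ^ 6*y₂ ^ 2*v) * h1 + (y₁ ^ 8*y₂ ^ 3*v + y₁ ^ 8*y₂ ^ 4*v - y₁ ^ 9*y₂ ^ 3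 - y₁ ^ 9*y₂ ^ 4 + 2*b₁*y₁ ^ 7*y₂ ^ 3*v + 3*b₁*y₁ ^ 7*y₂ ^ 4*v + b₁*y₁ ^ 8*y₂ ^ 2*v - 2*b₁*y₁ ^ 8*y₂ ^ 3 + b₁*y₁ ^ 8*y₂ ^ 3*v - 3*b₁*y₁ ^ 8*y₂ ^ 4 + b₁*b₄*y₁ ^ 7*y₂ ^ 2*v + 2*b₁*b₄*y₁ ^ 7*y₂ ^ 3*v - b₁*b₄*y₁ ^ 8*y₂ ^ 3 + b₁ ^ 2*y₁ ^ 6*y₂ ^ 3*v + 3*b₁ ^ 2*y₁ ^ 6*y₂ ^ 4*v + b₁ ^ 2*y₁ ^ 7*y₂ ^ 2*v - b₁ ^ 2*y₁ ^ 7*y₂ ^ 3 + 2*b₁ ^ 2*y₁ ^ 7*y₂ ^ 3*v - 3*b₁ ^ 2*y₁ ^ 7*y₂ ^ 4 + b₁ ^ 2*b₄*y₁ ^ 6*y₂ ^ 2*v + 4*b₁ ^ 2*b₄*y₁ ^ 6*y₂ ^ 3*v + b₁ ^ 2*b₄*y₁ ^ 7*y₂ ^ 2*v - 2*b₁ ^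 2*b₄*y₁ ^ 7*y₂ ^ 3 + b₁ ^ 2*b₄ ^ 2*y₁ ^ 6*y₂ ^ 2*v + b₁ ^ 3*y₁ ^ 5*y₂ ^ 4*v + b₁ ^ 3*y₁ ^ 6*y₂ ^ 3*v - b₁ ^ 3*y₁ ^ 6*y₂ ^ 4 + 2*b₁ ^ 3*b₄*y₁ ^ 5*y₂ ^ 3*v + b₁ ^ 3*b₄*y₁ ^ 6*y₂ ^ 2*v - b₁ ^ 3*b₄*y₁ ^ 6*y₂ ^ 3 + b₁ ^ 3*b₄ ^ 2*y₁ ^ 5*y₂ ^ 2*v) * h2
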